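/- Let N be a binary normal network on X with reticulated cherry {a,b} (reticulation leaf b), and let g_b be the grandparent of b that is not the parent of a. Then for all distinct c, c' in the visibility set V_{g_b}, the rooted triple bc|c' is not displayed by N. -/

import Mathlib

/-- A (candidate) rooted phylogenetic network structure: a directed graph on a
vertex type `V` with a distinguished root and a labelling of (intended) leaves
by elements of `X`.  The combinatorial axioms are imposed by predicates below. -/
structure Network (X : Type) where
  V : Type
  arc : V → V → Prop
  root : V
  leaf : X → V

namespace Network

variable {X : Type} (N : Network X)

def parents (v : N.V) : Set N.V := {u | N.arc u v}

def children (u : N.V) : Set N.V := {v | N.arc u v}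

/-- in-degree 1, out-degree 2 -/
def IsTreeVertex (v : N.V) : Prop := (N.parents v).ncard = 1 ∧ (N.children v).ncard = 2

/-- in-degree 2, out-degree 1 -/
def IsRetic (v : N.V) : Prop := (N.parents v).ncard = 2 ∧ (N.children v).ncard = 1

/-- in-degree 1, out-degree 0 -/
def IsLeafVertex (v : N.V) : Prop := (N.parents v).ncard = 1 ∧ (N.children v).ncard = 0

def Acyclic : Prop := ∀ v : N.V, ¬ Relation.TransGen N.arc v v

/-- A well-formed binary phylogenetic network (non-degenerate case): a finite
acyclic digraph with a root of in-degree 0 and out-degree 2, leaves of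
in-degree 1 and out-degree 0 bijectively labelled by `X`, and all remaining
vertices tree vertices or reticulations. -/
def Wf : Prop :=
  Finite N.V ∧ N.Acyclic ∧
  (N.parents N.root).ncard = 0 ∧ (N.children N.root).ncard = 2 ∧
  Function.Injective N.leaf ∧
  (∀ x : X, N.IsLeafVertex (N.leaf x)) ∧
  (∀ v : N.V, v = N.root ∨ (∃ x, N.leaf x = v) ∨ N.IsTreeVertex v ∨ N.IsRetic v)

/-- The degenerate network on a single leaf: one vertex, no arcs. -/
def Degenerate : Prop :=
  (∀ v : N.V, v = N.root) ∧ (∀ u v : N.V, ¬ N.arc u v) ∧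
  (∃! _x : X, True) ∧ (∀ x : X, N.leaf x = N.root)

def IsBinaryPhylo : Prop := N.Wf ∨ N.Degenerate

/-- `l` is a directed path (a list of successively adjacent vertices) from `u` to `v`. -/
def IsPathFromTo (l : List N.V) (u v : N.V) : Prop :=
  l.Chain' N.arc ∧ l.head? = some u ∧ l.getLast? = some v

/-- `v` is a descendant of `u` (equivalently, `u` is an ancestor of `v`). -/
def Desc (u v : N.V) : Prop := Relation.ReflTransGen N.arc u v

/-- The visibility set of `u`: those leaf labels `x` such that every directed
path from the root to the leaf labelled `x` traverses `u`. -/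
def visSet (u : N.V) : Set X :=
  {x | ∀ l : List N.V, N.IsPathFromTo l N.root (N.leaf x) → u ∈ l}

/-- The cluster set of `u`: leaf labels of leaves that are descendants of `u`. -/
def cluster (u : N.V) : Set X := {x | N.Desc u (N.leaf x)}

/-- A tree path from `u` to `t`: a directed path whose vertices other than the
endpoints are tree vertices. -/
def IsTreePath (l : List N.V) (u t : N.V) : Prop :=
  N.IsPathFromTo l u t ∧ ∀ v ∈ l, v ≠ u → v ≠ t → N.IsTreeVertex v

/-- Tree-child: every vertex with a child has a child that is a tree vertex or a leaf. -/
def TreeChild : Prop :=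
  ∀ v : N.V, (∃ c, N.arc v c) → ∃ c, N.arc v c ∧ (N.IsTreeVertex c ∨ N.IsLeafVertex c)

/-- Some reticulation arc `(u,v)` is a shortcut: there is a directed path from
`u` to `v` avoiding the arc `(u,v)`. -/
def HasShortcut : Prop :=
  ∃ u v, N.arc u v ∧ N.IsRetic v ∧ ∃ w, N.arc u w ∧ w ≠ v ∧ N.Desc w v

/-- Normal: tree-child with no shortcuts. -/
def IsNormal : Prop := N.TreeChild ∧ ¬ N.HasShortcut

def SiblingRetics (u v : N.V) : Prop :=
  u ≠ v ∧ N.IsRetic u ∧ N.IsRetic v ∧ ∃ p, N.arc p u ∧ N.arc p v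

def StackRetics (u v : N.V) : Prop :=
  N.IsRetic u ∧ N.IsRetic v ∧ N.arc u v

/-- `u` and `v` are near-sibling reticulations: some tree vertex `t` has as its
two children `v` and a tree vertex `s` that is a parent of `u`. -/
def NearSiblingRetics (u v : N.V) : Prop :=
  u ≠ v ∧ N.IsRetic u ∧ N.IsRetic v ∧
  ∃ t s, N.IsTreeVertex t ∧ N.IsTreeVertex s ∧ N.arc t s ∧ N.arc t v ∧ N.arc s u

/-- `u` and `v` are near-stack reticulations: the child of `u` is a tree vertex
that is a parent of `v`. -/
def NearStackRetics (u v : N.V) : Prop :=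
  N.IsRetic u ∧ N.IsRetic v ∧ ∃ s, N.arc u s ∧ N.IsTreeVertex s ∧ N.arc s v

def NoNearRetics : Prop :=
  (∀ u v, ¬ N.NearSiblingRetics u v) ∧ (∀ u v, ¬ N.NearStackRetics u v)

/-- `{a,b}` is a cherry: the leaves labelled `a` and `b` share a parent. -/
def Cherry (a b : X) : Prop :=
  a ≠ b ∧ ∃ p, N.arc p (N.leaf a) ∧ N.arc p (N.leaf b)

/-- `{a,b}` is a reticulated cherry with reticulation leaf `b`. -/
def ReticCherry (a b : X) : Prop :=
  a ≠ b ∧ ∃ pa pb, N.arc pa (N.leaf a) ∧ N.arc pb (N.leaf b) ∧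
    N.IsRetic pb ∧ N.arc pa pb

/-- `N` displays the rooted triple `xy|z`: there is a subdigraph of `N` that
is a subdivision of the rooted triple tree with `z` adjacent to the root,
i.e. vertices `p` (the root image) and `q` (the image of the parent of `x,y`)
together with internally disjoint directed paths as below. -/
def Displays (x y z : X) : Prop :=
  x ≠ y ∧ x ≠ z ∧ y ≠ z ∧
  ∃ (p q : N.V) (l0 lx ly lz : List N.V),
    p ≠ q ∧
    N.IsPathFromTo l0 p q ∧
    N.IsPathFromTo lx q (N.leaf x) ∧
    N.IsPathFromTo ly q (N.leaf y) ∧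
    N.IsPathFromTo lz p (N.leaf z) ∧
    (∀ v ∈ lx, v ∈ ly → v = q) ∧
    (∀ v ∈ l0, v ∈ lx ∨ v ∈ ly → v = q) ∧
    (∀ v ∈ lz, v ∈ l0 ∨ v ∈ lx ∨ v ∈ ly → v = p)

/-- `R(N)`: the set of rooted triples displayed by `N`, encoded as ordered
triples `(x, y, z)` standing for `xy|z`. -/
def RDisp : Set (X × X × X) := {t | N.Displays t.1 t.2.1 t.2.2}

/-- Isomorphism of networks on the same leaf set: a digraph isomorphism fixing
each leaf label. -/
def Isomorphic (N1 N2 : Network X) : Prop :=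
  ∃ φ : N1.V ≃ N2.V,
    (∀ u v, N1.arc u v ↔ N2.arc (φ u) (φ v)) ∧ (∀ x, φ (N1.leaf x) = N2.leaf x)

/-- A candidate set for `b` (relative to `a`): a non-empty subset
`W ⊆ X - {a,b}` satisfying conditions (W1)–(W5). -/
def CandidateSet (a b : X) (W : Set X) : Prop :=
  W.Nonempty ∧ a ∉ W ∧ b ∉ W ∧
  -- (W1)
  (∀ c ∈ W, ∀ x : X, x ∉ W → x ≠ b →
    N.Displays b c x ∧ ¬ N.Displays a c b) ∧
  -- (W2)
  (∀ c ∈ W, ∀ c' ∈ W, c ≠ c' → ¬ N.Displays b c c') ∧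
  -- (W3)
  (∀ c ∈ W, ∀ x : X, x ∉ W → x ≠ a → x ≠ b →
    (N.Displays c x a ↔ N.Displays b x a)) ∧
  -- (W4)
  (∀ x y : X, x ∉ W → x ≠ a → x ≠ b → y ∉ W → y ≠ a → y ≠ b →
    N.Displays b x y → ¬ N.Displays a x y → ∀ c ∈ W, N.Displays c x y) ∧
  -- (W5)
  (∀ c ∈ W, (∀ x : X, x ∉ W → x ≠ a → x ≠ b → N.Displays a c x) →
    ∀ x : X, x ∉ W → x ≠ a → x ≠ b → ¬ N.Displays a x c ∧ ¬ N.Displays a x b)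

end Network


namespace Network

variable {X : Type} {N : Network X}

private lemma pair_mem_eq {α} {s : Set α} {x y u v w : α} (hs : s = {x, y})
    (hu : u ∈ s) (hv : v ∈ s) (huv : u ≠ v) (hw : w ∈ s) : w = u ∨ w = v := by
  subst hs
  simp only [Set.mem_insert_iff, Set.mem_singleton_iff] at hu hv hw
  rcases hu with rfl | rfl <;> rcases hv with rfl | rfl <;> rcases hw with rfl | rfl <;> tauto

lemma pathDesc : ∀ {l : List N.V} {u v : N.V}, N.IsPathFromTo l u v →
    ∀ x ∈ l, N.Desc u x ∧ N.Desc x v := by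
  intro l
  induction l with
  | nil => intro u v h x hx; simp at hx
  | cons a t ih =>
    intro u v h x hx
    obtain ⟨hc, hh, hl⟩ := h
    simp only [List.head?_cons, Option.some.injEq] at hh
    subst hh
    cases t with
    | nil =>
      simp only [List.getLast?_singleton, Option.some.injEq] at hl
      subst hl
      simp only [List.mem_singleton] at hx
      subst hx
      exact ⟨Relation.ReflTransGen.refl, Relation.ReflTransGen.refl⟩
    | cons b t' =>
      replace hc := List.isChain_cons_cons.mp hc
      rw [List.getLast?_cons_cons] at hl
      have hpt : N.IsPathFromTo (b :: t') b v := ⟨hc.2, rfl, hl⟩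
      rcases List.mem_cons.mp hx with rfl | hx'
      · refine ⟨Relation.ReflTransGen.refl, ?_⟩
        exact Relation.ReflTransGen.head hc.1
          (ih hpt b (List.mem_cons_self)).2
      · obtain ⟨h1, h2⟩ := ih hpt x hx'
        exact ⟨Relation.ReflTransGen.head hc.1 h1, h2⟩

lemma pathPred : ∀ {l : List N.V} {u v : N.V}, N.IsPathFromTo l u v →
    ∀ x ∈ l, x ≠ u → ∃ z ∈ l, N.arc z x := by
  intro l
  induction l with
  | nil => intro u v h x hx; simp at hx
  | cons a t ih =>
    intro u v h x hx hxu
    obtain ⟨hc, hh, hl⟩ := h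
    simp only [List.head?_cons, Option.some.injEq] at hh
    subst hh
    rcases List.mem_cons.mp hx with rfl | hx'
    · exact absurd rfl hxu
    · cases t with
      | nil => simp at hx'
      | cons b t' =>
        replace hc := List.isChain_cons_cons.mp hc
        rw [List.getLast?_cons_cons] at hl
        have hpt : N.IsPathFromTo (b :: t') b v := ⟨hc.2, rfl, hl⟩
        by_cases hxb : x = b
        · subst hxb
          exact ⟨a, List.mem_cons_self, hc.1⟩
        · obtain ⟨z, hz1, hz2⟩ := ih hpt x hx' hxb
          exact ⟨z, List.mem_cons_of_mem _ hz1, hz2⟩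

lemma path_ends {l : List N.V} {u v : N.V} (h : N.IsPathFromTo l u v) :
    u ∈ l ∧ v ∈ l := by
  obtain ⟨_, hh, hl⟩ := h
  constructor
  · cases l with
    | nil => simp at hh
    | cons a t =>
      simp only [List.head?_cons, Option.some.injEq] at hh
      subst hh; exact List.mem_cons_self
  · exact List.mem_of_mem_getLast? (by rw [hl]; rfl)

lemma path_desc {l : List N.V} {u v : N.V} (h : N.IsPathFromTo l u v) : N.Desc u v :=
  (pathDesc h v (path_ends h).2).1

lemma path_cons {l : List N.V} {u w v : N.V} (h : N.arc u w)
    (hp : N.IsPathFromTo l w v) : N.IsPathFromTo (u :: l) u v := by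
  obtain ⟨hc, hh, hl⟩ := hp
  cases l with
  | nil => simp at hh
  | cons a t =>
    simp only [List.head?_cons, Option.some.injEq] at hh
    subst hh
    exact ⟨List.isChain_cons_cons.mpr ⟨h, hc⟩, rfl, by rw [List.getLast?_cons_cons]; exact hl⟩

lemma pathOfDesc {u v : N.V} (h : N.Desc u v) : ∃ l, N.IsPathFromTo l u v := by
  induction h using Relation.ReflTransGen.head_induction_on with
  | refl => exact ⟨[v], List.isChain_singleton v, rfl, rfl⟩
  | head harc _ ih =>
    obtain ⟨l, hl⟩ := ih
    exact ⟨_, path_cons harc hl⟩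

lemma path_append : ∀ {l1 : List N.V} {u v w : N.V} {l2 : List N.V},
    N.IsPathFromTo l1 u v → N.IsPathFromTo l2 v w →
    ∃ l, N.IsPathFromTo l u w ∧ ∀ x ∈ l, x ∈ l1 ∨ x ∈ l2 := by
  intro l1
  induction l1 with
  | nil => intro u v w l2 h1 h2; obtain ⟨_, hh, _⟩ := h1; simp at hh
  | cons a t ih =>
    intro u v w l2 h1 h2
    obtain ⟨hc, hh, hl⟩ := h1
    simp only [List.head?_cons, Option.some.injEq] at hh
    subst hh
    cases t with
    | nil =>
      simp only [List.getLast?_singleton, Option.some.injEq] at hl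
      subst hl
      exact ⟨l2, h2, fun x hx => Or.inr hx⟩
    | cons b t' =>
      replace hc := List.isChain_cons_cons.mp hc
      rw [List.getLast?_cons_cons] at hl
      obtain ⟨l, hlp, hm⟩ := ih ⟨hc.2, rfl, hl⟩ h2
      refine ⟨a :: l, path_cons hc.1 hlp, ?_⟩
      intro x hx
      rcases List.mem_cons.mp hx with rfl | hx'
      · exact Or.inl (List.mem_cons_self)
      · rcases hm x hx' with h | h
        · exact Or.inl (List.mem_cons_of_mem _ h)
        · exact Or.inr h

lemma descTrans {u v : N.V} (h : N.Desc u v) (hne : u ≠ v) :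
    Relation.TransGen N.arc u v := by
  rcases Relation.reflTransGen_iff_eq_or_transGen.mp h with rfl | h'
  · exact absurd rfl hne
  · exact h'

end Network

/-- Lemma (iii): for a reticulated cherry `{a,b}` with reticulation leaf `b` in
a binary normal network `N`, with `g_b` the grandparent of `b` other than the
parent `p_a` of `a`: for all distinct `c, c' ∈ V_{g_b}`, `N` does not display
`bc|c'`. -/
theorem vgb_property_iii {X : Type} (N : Network X)
    (h : N.IsBinaryPhylo) (hn : N.IsNormal) (a b : X) (hab : a ≠ b)
    (pa pb gb : N.V)
    (hpa : N.arc pa (N.leaf a)) (hpb : N.arc pb (N.leaf b))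
    (hretic : N.IsRetic pb) (hpapb : N.arc pa pb) (hgbpb : N.arc gb pb)
    (hgbpa : gb ≠ pa) :
    ∀ c ∈ N.visSet gb, ∀ c' ∈ N.visSet gb, c ≠ c' → ¬ N.Displays b c c' := by
  have hwf : N.Wf := by
    rcases h with hwf | hdeg
    · exact hwf
    · exact absurd hpapb (hdeg.2.1 pa pb)
  obtain ⟨hfin, hacyc, hrootp, hrootc, hinj, hleaf, hclass⟩ := hwf
  haveI := hfin
  -- no arcs out of leaves
  have noChild : ∀ (x : X) (w : N.V), ¬ N.arc (N.leaf x) w := by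
    intro x w hw
    have h0 : N.children (N.leaf x) = ∅ :=
      (Set.ncard_eq_zero (Set.toFinite _)).mp (hleaf x).2
    exact absurd (show w ∈ N.children (N.leaf x) from hw) (by simp [h0])
  have descLeaf : ∀ (x : X) (v : N.V), N.Desc (N.leaf x) v → v = N.leaf x := by
    intro x v hd
    rcases hd.cases_head with e | ⟨w2, hw2, _⟩
    · exact e.symm
    · exact absurd hw2 (noChild x w2)
  -- unique child of pb
  have childPb : ∀ w, N.arc pb w → w = N.leaf b := by
    obtain ⟨z, hz⟩ := Set.ncard_eq_one.mp hretic.2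
    intro w hw
    have h1 : w ∈ ({z} : Set N.V) := hz ▸ hw
    have h2 : N.leaf b ∈ ({z} : Set N.V) := hz ▸ hpb
    simp only [Set.mem_singleton_iff] at h1 h2
    rw [h1, h2]
  have descPb : ∀ v, N.Desc pb v → v = pb ∨ v = N.leaf b := by
    intro v hd
    rcases hd.cases_head with e | ⟨w2, hw2, hd2⟩
    · exact Or.inl e.symm
    · rw [childPb w2 hw2] at hd2
      exact Or.inr (descLeaf b v hd2)
  -- unique parent of leaf b
  have parLeafb : ∀ z, N.arc z (N.leaf b) → z = pb := by
    obtain ⟨z, hz⟩ := Set.ncard_eq_one.mp (hleaf b).1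
    intro w hw
    have h1 : w ∈ ({z} : Set N.V) := hz ▸ hw
    have h2 : pb ∈ ({z} : Set N.V) := hz ▸ hpb
    simp only [Set.mem_singleton_iff] at h1 h2
    rw [h1, h2]
  -- parents of pb are pa and gb
  have parPb : ∀ z, N.arc z pb → z = pa ∨ z = gb := by
    obtain ⟨x, y, hxy, hs⟩ := Set.ncard_eq_two.mp hretic.1
    intro z hz
    exact Network.pair_mem_eq hs (show pa ∈ N.parents pb from hpapb)
      (show gb ∈ N.parents pb from hgbpb) (Ne.symm hgbpa)
      (show z ∈ N.parents pb from hz)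
  have hpapb_ne : pa ≠ pb := by
    intro e; exact hacyc pb (Relation.TransGen.single (e ▸ hpapb))
  have hlapb_ne : N.leaf a ≠ pb := by
    intro e; exact noChild a (N.leaf b) (e ▸ hpb)
  -- children of pa are leaf a and pb
  have childPa : ∀ w, N.arc pa w → w = N.leaf a ∨ w = pb := by
    have h2 : (N.children pa).ncard = 2 := by
      rcases hclass pa with rfl | ⟨x, e⟩ | ht | hr
      · exact hrootc
      · exact absurd (e ▸ hpapb) (noChild x pb)
      · exact ht.2
      · exfalso
        obtain ⟨z, hz⟩ := Set.ncard_eq_one.mp hr.2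
        have h1 : N.leaf a ∈ ({z} : Set N.V) := hz ▸ hpa
        have h2 : pb ∈ ({z} : Set N.V) := hz ▸ hpapb
        simp only [Set.mem_singleton_iff] at h1 h2
        exact hlapb_ne (h1.trans h2.symm)
    obtain ⟨x, y, hxy, hs⟩ := Set.ncard_eq_two.mp h2
    intro w hw
    exact Network.pair_mem_eq hs (show N.leaf a ∈ N.children pa from hpa)
      (show pb ∈ N.children pa from hpapb) hlapb_ne
      (show w ∈ N.children pa from hw)
  -- no directed path from gb to pa
  have noGbPa : ¬ Relation.TransGen N.arc gb pa := by
    intro ht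
    obtain ⟨w, hgw, hwpa⟩ := (Relation.TransGen.head'_iff).mp ht
    by_cases hwpb : w = pb
    · subst hwpb
      rcases descPb pa hwpa with e | e
      · exact hpapb_ne e
      · exact noChild b w (e ▸ hpapb)
    · exact hn.2 ⟨gb, pb, hgbpb, hretic, w, hgw, hwpb,
        hwpa.trans (Relation.ReflTransGen.single hpapb)⟩
  -- every vertex is reachable from the root
  have reach : ∀ v, N.Desc N.root v := by
    have irr : IsIrrefl N.V (Relation.TransGen N.arc) := ⟨hacyc⟩
    have hwf2 : WellFounded (Relation.TransGen N.arc) :=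
      Finite.wellFounded_of_trans_of_irrefl _
    have hwfa : WellFounded N.arc :=
      Subrelation.wf (fun h => Relation.TransGen.single h) hwf2
    intro v
    induction v using hwfa.induction with
    | _ v ih =>
      rcases hclass v with rfl | h'
      · exact Relation.ReflTransGen.refl
      · have hne : (N.parents v).Nonempty := by
          apply Set.nonempty_of_ncard_ne_zero
          rcases h' with ⟨x, e⟩ | ht | hr
          · rw [← e, (hleaf x).1]; simp
          · rw [ht.1]; simp
          · rw [hr.1]; simp
        obtain ⟨z, hz⟩ := hne
        exact (ih z hz).tail hz
  -- a is not in the visibility set of gb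
  have notA : a ∉ N.visSet gb := by
    intro hav
    obtain ⟨r, hr⟩ := Network.pathOfDesc (reach pa)
    have h2p : N.IsPathFromTo [pa, N.leaf a] pa (N.leaf a) :=
      ⟨List.isChain_pair.mpr hpa, rfl, rfl⟩
    obtain ⟨L, hL, hmem⟩ := Network.path_append hr h2p
    rcases hmem gb (hav L hL) with hgl | hgl
    · have hd := (Network.pathDesc hr gb hgl).2
      exact noGbPa (Network.descTrans hd hgbpa)
    · simp only [List.mem_cons, List.mem_singleton] at hgl
      rcases hgl with e | e | e
      · exact hgbpa e
      · exact noChild a pb (e ▸ hgbpb)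
      · simp at e
  intro c hc c' hc' hcc' hdisp
  obtain ⟨hbc, hbc', hcc'2, p, q, l0, lx, ly, lz, hpq, h0, hx, hy, hz, d1, d2, d3⟩ := hdisp
  have hdpq : N.Desc p q := Network.path_desc h0
  have hdq_lc : N.Desc q (N.leaf c) := Network.path_desc hy
  have hdq_lb : N.Desc q (N.leaf b) := Network.path_desc hx
  -- q ≠ leaf b
  have hq_lb : q ≠ N.leaf b := by
    intro e
    have := descLeaf b (N.leaf c) (e ▸ hdq_lc)
    exact hbc (hinj this).symm
  -- pb ∈ lx
  obtain ⟨z1, hz1m, hz1a⟩ := Network.pathPred hx (N.leaf b) (Network.path_ends hx).2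
    (Ne.symm hq_lb)
  have hz1pb : z1 = pb := parLeafb z1 hz1a
  rw [hz1pb] at hz1m hz1a
  -- q ≠ pb
  have hq_pb : q ≠ pb := by
    intro e
    rcases descPb (N.leaf c) (e ▸ hdq_lc) with e2 | e2
    · exact noChild c (N.leaf b) (e2 ▸ hpb)
    · exact hbc (hinj e2).symm
  -- predecessor of pb in lx
  obtain ⟨z, hzm, hza⟩ := Network.pathPred hx pb hz1m (Ne.symm hq_pb)
  have hdqz : N.Desc q z := (Network.pathDesc hx z hzm).1
  -- combined root → leaf c and root → leaf c' paths
  obtain ⟨r, hr⟩ := Network.pathOfDesc (reach p)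
  obtain ⟨L1, hL1, hm1⟩ := Network.path_append hr h0
  obtain ⟨L, hL, hm⟩ := Network.path_append hL1 hy
  obtain ⟨L', hL', hm'⟩ := Network.path_append hr hz
  have hgbL : gb ∈ r ∨ gb ∈ l0 ∨ gb ∈ ly := by
    rcases hm gb (hc L hL) with h1 | h1
    · rcases hm1 gb h1 with h2 | h2
      · exact Or.inl h2
      · exact Or.inr (Or.inl h2)
    · exact Or.inr (Or.inr h1)
  have hgbL' : gb ∈ r ∨ gb ∈ lz := hm' gb (hc' L' hL')
  rcases parPb z hza with rfl | rfl
  · -- z = pa case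
    have hqpa : q ≠ z := by
      intro e
      rcases (e ▸ hdq_lc : N.Desc z (N.leaf c)).cases_head with e2 | ⟨w, hw, hwd⟩
      · exact noChild c (N.leaf a) (e2 ▸ hpa)
      · rcases childPa w hw with rfl | rfl
        · have := descLeaf a (N.leaf c) hwd
          exact notA ((hinj this) ▸ hc)
        · rcases descPb (N.leaf c) hwd with e3 | e3
          · exact noChild c (N.leaf b) (e3 ▸ hpb)
          · exact hbc (hinj e3).symm
    have tqpa : Relation.TransGen N.arc q z := Network.descTrans hdqz hqpa
    rcases hgbL with hgr | hgl0 | hgly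
    · have hdgp : N.Desc gb p := (Network.pathDesc hr gb hgr).2
      exact noGbPa (Relation.TransGen.trans_right (hdgp.trans hdpq) tqpa)
    · have hdgq : N.Desc gb q := (Network.pathDesc h0 gb hgl0).2
      exact noGbPa (Relation.TransGen.trans_right hdgq tqpa)
    · rcases hgbL' with hgr | hgz
      · have hdgp : N.Desc gb p := (Network.pathDesc hr gb hgr).2
        exact noGbPa (Relation.TransGen.trans_right (hdgp.trans hdpq) tqpa)
      · have e1 : gb = p := d3 gb hgz (Or.inr (Or.inr hgly))
        exact hpq (d2 p (Network.path_ends h0).1 (Or.inr (e1 ▸ hgly)))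
  · -- z = gb case
    by_cases hgq : z = q
    · rcases hgbL' with hgr | hgz
      · have hdgp : N.Desc z p := (Network.pathDesc hr z hgr).2
        exact hacyc z (Relation.TransGen.trans_right hdgp
          (hgq ▸ Network.descTrans hdpq hpq))
      · have := d3 z hgz (Or.inr (Or.inl hzm))
        exact hpq (this ▸ hgq)
    · have tqgb : Relation.TransGen N.arc q z := Network.descTrans hdqz (Ne.symm hgq)
      rcases hgbL with hgr | hgl0 | hgly
      · have hdgp : N.Desc z p := (Network.pathDesc hr z hgr).2
        exact hacyc z (Relation.TransGen.trans_right (hdgp.trans hdpq) tqgb)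
      · exact hgq (d2 z hgl0 (Or.inl hzm))
      · exact hgq (d1 z hzm hgly)
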